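/- Let q be a prime power and let n_1 and n_2 be odd positive integers that are coprime to each other and to q. If all monic irreducible factors of x^{n_1} − 1 over F_{q^2} are SCRIM and x − 1 is the only SCRIM factor of x^{n_2} − 1 over F_{q^2}, then the number of SCRIM factors of x^{n_1 n_2} − 1 over F_{q^2} equals the number of SCRIM factors of x^{n_1} − 1 over F_{q^2}, i.e., |Ω_{q^2,n_1 n_2}| = |Ω_{q^2,n_1}|. -/

import Mathlib

open Polynomial

/-- The reciprocal polynomial `f*(x) = x^(deg f) * f(0)⁻¹ * f(1/x)`. -/
noncomputable def crecip {F : Type*} [Field F] (f : F[X]) : F[X] :=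
  C (f.coeff 0)⁻¹ * f.reverse

/-- The conjugate-reciprocal polynomial `f†`, obtained by applying the
conjugation `a ↦ a ^ q` to each coefficient of `f*`. -/
noncomputable def cdagger {F : Type*} [Field F] (q : ℕ) (f : F[X]) : F[X] :=
  (crecip f).sum fun i a => C (a ^ q) * X ^ i

/-- A polynomial is SCRIM if it is monic, irreducible, and self-conjugate-reciprocal. -/
def IsSCRIM {F : Type*} [Field F] (q : ℕ) (f : F[X]) : Prop :=
  f.Monic ∧ Irreducible f ∧ f = cdagger q f

/-- The set `Ω_{q²,n}` of SCRIM factors of `x^n - 1` over `F = F_{q²}`. -/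
def scrimFactors (F : Type*) [Field F] (q n : ℕ) : Set F[X] :=
  {f | IsSCRIM q f ∧ f ∣ X ^ n - 1}

section Aux

variable {F : Type*} [Field F]

lemma cdagger_eq_map (p k : ℕ) [ExpChar F p] (g : F[X]) :
    cdagger (p ^ k) g = (crecip g).map (iterateFrobenius F p k) := by
  rw [cdagger, show (crecip g).map (iterateFrobenius F p k)
      = eval₂ (C.comp (iterateFrobenius F p k)) X (crecip g) from rfl, eval₂_eq_sum]
  simp only [RingHom.comp_apply, iterateFrobenius_def]

lemma aeval_cdagger_eq_zero {K : Type*} [Field K] [Algebra F K]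
    (p k : ℕ) [Fact p.Prime] [CharP F p] (g : F[X]) (β : K) (hβ : β ≠ 0)
    (hg : aeval β g = 0) : aeval (β⁻¹ ^ p ^ k) (cdagger (p ^ k) g) = 0 := by
  haveI : CharP K p := charP_of_injective_algebraMap (algebraMap F K).injective p
  have hcomp : (algebraMap F K).comp (iterateFrobenius F p k)
      = (iterateFrobenius K p k).comp (algebraMap F K) := by
    ext a
    simp [iterateFrobenius_def, map_pow]
  have key : aeval (β⁻¹ ^ p ^ k) (cdagger (p ^ k) g)
      = iterateFrobenius K p k (aeval β⁻¹ (crecip g)) := by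
    rw [cdagger_eq_map p k, aeval_def, eval₂_map, hcomp, aeval_def, hom_eval₂]
    congr 1
  haveI : Invertible β := invertibleOfNonzero hβ
  have hrev : eval₂ (algebraMap F K) β⁻¹ (reverse g) = 0 := by
    rw [← invOf_eq_inv β]
    exact (eval₂_reverse_eq_zero_iff _ _ _).mpr (by rwa [aeval_def] at hg)
  rw [key, crecip, map_mul, aeval_C, aeval_def, hrev, mul_zero, map_zero]

lemma crecip_monic {g : F[X]} (hg : g.Monic) (h0 : g.coeff 0 ≠ 0) : (crecip g).Monic := by
  have ht : g.natTrailingDegree = 0 := natTrailingDegree_eq_zero.mpr (Or.inr h0)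
  have htc : g.trailingCoeff = g.coeff 0 := by rw [trailingCoeff, ht]
  rw [Monic, crecip, leadingCoeff_mul, leadingCoeff_C, reverse_leadingCoeff, htc]
  exact inv_mul_cancel₀ h0

lemma crecip_natDegree {g : F[X]} (h0 : g.coeff 0 ≠ 0) :
    (crecip g).natDegree = g.natDegree := by
  have ht : g.natTrailingDegree = 0 := natTrailingDegree_eq_zero.mpr (Or.inr h0)
  rw [crecip, natDegree_C_mul_eq_of_mul_eq_one (mul_inv_cancel₀ h0),
    reverse_natDegree, ht, Nat.sub_zero]

lemma monic_eq_of_dvd_of_natDegree {a b : F[X]} (ha : a.Monic) (hb : b.Monic)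
    (hd : a ∣ b) (hdeg : b.natDegree = a.natDegree) : a = b := by
  obtain ⟨u, rfl⟩ := hd
  have hu0 : u ≠ 0 := by
    rintro rfl
    rw [mul_zero] at hb
    exact hb.ne_zero rfl
  rw [natDegree_mul ha.ne_zero hu0] at hdeg
  have hu : u.natDegree = 0 := by omega
  obtain ⟨c, rfl⟩ := natDegree_eq_zero.mp hu
  have hlc := hb.leadingCoeff
  rw [leadingCoeff_mul, ha.leadingCoeff, one_mul, leadingCoeff_C] at hlc
  rw [hlc, C_1, mul_one]

lemma scrim_core (p k n₁ n₂ : ℕ) [Fact p.Prime] [CharP F p]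
    (hn₁ : n₁ ≠ 0) (hn₂ : n₂ ≠ 0)
    (hone₂ : scrimFactors F (p ^ k) n₂ = {X - 1})
    {f : F[X]} (hf : IsSCRIM (p ^ k) f) (hdvd : f ∣ X ^ (n₁ * n₂) - 1) :
    f ∣ X ^ n₁ - 1 := by
  obtain ⟨hmon, hirr, hself⟩ := hf
  haveI : Fact (Irreducible f) := ⟨hirr⟩
  set K := AdjoinRoot f with hK
  set α : K := AdjoinRoot.root f with hα
  have hαN : α ^ (n₁ * n₂) = 1 := by
    have h2 : aeval α (X ^ (n₁ * n₂) - 1 : F[X]) = 0 := by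
      rw [AdjoinRoot.aeval_eq]
      exact AdjoinRoot.mk_eq_zero.mpr hdvd
    rw [map_sub, map_one, aeval_X_pow, sub_eq_zero] at h2
    exact h2
  have hα0 : α ≠ 0 := by
    intro h
    rw [h, zero_pow (by positivity)] at hαN
    exact zero_ne_one hαN
  have hfα : aeval α f = 0 := by rw [AdjoinRoot.aeval_eq, AdjoinRoot.mk_self]
  have h1 : aeval (α⁻¹ ^ p ^ k) f = 0 := by
    have := aeval_cdagger_eq_zero p k f α hα0 hfα
    rwa [← hself] at this
  set σ : K →ₐ[F] K := AdjoinRoot.liftAlgHom f (Algebra.ofId F K) (α⁻¹ ^ p ^ k) h1 with hσdef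
  have hσ : σ α = α⁻¹ ^ p ^ k := by
    rw [hσdef]
    exact AdjoinRoot.liftAlgHom_root f (Algebra.ofId F K) (α⁻¹ ^ p ^ k) h1
  set γ : K := α ^ n₁ with hγdef
  have hγn : γ ^ n₂ = 1 := by rw [hγdef, ← pow_mul]; exact hαN
  have hγ0 : γ ≠ 0 := pow_ne_zero _ hα0
  have hγint : IsIntegral F γ := by
    haveI : Module.Finite F K := Module.Finite.of_basis (AdjoinRoot.powerBasisAux' hmon)
    exact IsIntegral.of_finite F γ
  set h := minpoly F γ with hh
  have hhmon : h.Monic := minpoly.monic hγint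
  have hhirr : Irreducible h := minpoly.irreducible hγint
  have hhd : h ∣ X ^ n₂ - 1 := minpoly.dvd F γ (by
    rw [map_sub, map_one, aeval_X_pow, hγn, sub_self])
  have hh0 : h.coeff 0 ≠ 0 := by
    intro h0
    have hdv : h.eval 0 ∣ (X ^ n₂ - 1 : F[X]).eval 0 := eval_dvd hhd
    rw [← coeff_zero_eq_eval_zero, h0, zero_dvd_iff] at hdv
    rw [eval_sub, eval_pow, eval_X, eval_one, zero_pow hn₂, zero_sub, neg_eq_zero] at hdv
    exact one_ne_zero hdv
  have hγq : aeval γ h = 0 := minpoly.aeval F γ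
  have hdag0 : aeval (γ⁻¹ ^ p ^ k) (cdagger (p ^ k) h) = 0 :=
    aeval_cdagger_eq_zero p k h γ hγ0 hγq
  have hσγ : σ γ = γ⁻¹ ^ p ^ k := by
    rw [hγdef, map_pow, hσ, ← inv_pow, ← pow_mul, ← pow_mul, mul_comm]
  have hmin : minpoly F (γ⁻¹ ^ p ^ k) = h := by
    rw [← hσγ, minpoly.algHom_eq σ σ.injective]
  have hdvd2 : h ∣ cdagger (p ^ k) h := by
    have := minpoly.dvd F (γ⁻¹ ^ p ^ k) hdag0
    rwa [hmin] at this
  have hcmon : (cdagger (p ^ k) h).Monic := by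
    rw [cdagger_eq_map]
    exact (crecip_monic hhmon hh0).map _
  have hcdeg : (cdagger (p ^ k) h).natDegree = h.natDegree := by
    rw [cdagger_eq_map, (crecip_monic hhmon hh0).natDegree_map, crecip_natDegree hh0]
  have hEq : h = cdagger (p ^ k) h :=
    monic_eq_of_dvd_of_natDegree hhmon hcmon hdvd2 hcdeg
  have hmem : h ∈ scrimFactors F (p ^ k) n₂ := ⟨⟨hhmon, hhirr, hEq⟩, hhd⟩
  rw [hone₂, Set.mem_singleton_iff] at hmem
  have hγ1 : γ = 1 := by
    have := minpoly.aeval F γ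
    rw [← hh, hmem, map_sub, aeval_X, map_one, sub_eq_zero] at this
    exact this
  have hfin : aeval α (X ^ n₁ - 1 : F[X]) = 0 := by
    rw [map_sub, map_one, aeval_X_pow, ← hγdef, hγ1, sub_self]
  rw [AdjoinRoot.aeval_eq] at hfin
  exact AdjoinRoot.mk_eq_zero.mp hfin

end Aux

theorem stmt8 {q n₁ n₂ : ℕ} (hq : IsPrimePow q)
    {F : Type*} [Field F] [Fintype F] (hF : Fintype.card F = q ^ 2)
    (hn₁ : Odd n₁) (hn₂ : Odd n₂) (h12 : Nat.Coprime n₁ n₂)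
    (h1q : Nat.Coprime n₁ q) (h2q : Nat.Coprime n₂ q)
    (hall₁ : ∀ f : F[X], f.Monic → Irreducible f → f ∣ X ^ n₁ - 1 → IsSCRIM q f)
    (hone₂ : scrimFactors F q n₂ = {X - 1}) :
    (scrimFactors F q (n₁ * n₂)).ncard = (scrimFactors F q n₁).ncard := by
  obtain ⟨p, k, hpp, hk, rfl⟩ := hq
  have pp : p.Prime := Nat.prime_iff.mpr hpp
  haveI : Fact p.Prime := ⟨pp⟩
  haveI hcr := ringChar.charP F
  obtain ⟨n, hrp, hcard⟩ := FiniteField.card F (ringChar F)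
  have hrc : ringChar F = p := by
    have h1 : (ringChar F : ℕ) ^ (n : ℕ) = p ^ (k * 2) := by
      rw [← hcard, hF, ← pow_mul]
    have h2 : p ∣ ringChar F ^ (n : ℕ) := by
      rw [h1]
      exact dvd_pow_self p (by omega)
    exact ((Nat.prime_dvd_prime_iff_eq pp hrp).mp (pp.dvd_of_dvd_pow h2)).symm
  haveI : CharP F p := hrc ▸ hcr
  have hn₁0 : n₁ ≠ 0 := by rintro rfl; obtain ⟨m, hm⟩ := hn₁; omega
  have hn₂0 : n₂ ≠ 0 := by rintro rfl; obtain ⟨m, hm⟩ := hn₂; omega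
  have hset : scrimFactors F (p ^ k) (n₁ * n₂) = scrimFactors F (p ^ k) n₁ := by
    ext f
    constructor
    · rintro ⟨hs, hd⟩
      exact ⟨hs, scrim_core p k n₁ n₂ hn₁0 hn₂0 hone₂ hs hd⟩
    · rintro ⟨hs, hd⟩
      refine ⟨hs, hd.trans ?_⟩
      have := sub_dvd_pow_sub_pow (X ^ n₁ : F[X]) 1 n₂
      rwa [one_pow, ← pow_mul] at this
  rw [hset]
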